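/- Let p be a prime with p > q and let t ≥ 1. If x, y ∈ {0,1}^q satisfy wt(x) = wt(y) = n, vts_t(x) = vts_t(y), and there exists z ∈ {0,1}^q with z ≤ x and z ≤ y componentwise and wt(z) ≥ n − t, then x = y. In other words, for every a ∈ (ℤ/pℤ)^t the code C(q, n, p, t, a) corrects t asymmetric errors. -/

import Mathlib

/-- Hamming weight of a binary vector `x ∈ {0,1}^q`. -/
def wt {q : ℕ} (x : Fin q → Bool) : ℕ :=
  (Finset.univ.filter fun i => x i = true).card

/-- The VT-syndrome vector of `x ∈ {0,1}^q` (coordinates indexed by `1, …, q`):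
its `k`-th entry is `∑_{i=1}^q i^k x_i mod p`, for `k = 1, …, t`. -/
def vts (q p t : ℕ) (x : Fin q → Bool) : Fin t → ZMod p :=
  fun k => ∑ i : Fin q, (if x i then ((((i : ℕ) + 1 : ℕ) : ZMod p) ^ ((k : ℕ) + 1)) else 0)

/-- The VT-syndrome code `C(q, n, p, t, a)`. -/
def VTCode (q n p t : ℕ) (a : Fin t → ZMod p) : Set (Fin q → Bool) :=
  {x | wt x = n ∧ vts q p t x = a}

/-- The support of a binary vector. -/
def supp {q : ℕ} (x : Fin q → Bool) : Finset (Fin q) :=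
  Finset.univ.filter fun i => x i = true

/-- A set `B` of binary vectors of weight `n` corrects `t` asymmetric errors if there is no
vector of weight `n - t` lying componentwise below two distinct elements of `B`. -/
def CorrectsAsym (q n t : ℕ) (B : Set (Fin q → Bool)) : Prop :=
  ∀ x ∈ B, ∀ y ∈ B, ∀ z : Fin q → Bool, wt z = n - t → z ≤ x → z ≤ y → x = y

open Finset in
lemma aeval_psum' {σ F : Type*} [Fintype σ] [CommRing F] (f : σ → F) (n : ℕ) :
    MvPolynomial.aeval f (MvPolynomial.psum σ F n) = ∑ i, f i ^ n := by
  simp [MvPolynomial.psum]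

open Finset in
lemma esymm_eq_of_psum_eq {F : Type*} [Field F] {σ τ : Type*} [Fintype σ] [Fintype τ]
    [DecidableEq σ] [DecidableEq τ]
    (f : σ → F) (g : τ → F) (t : ℕ)
    (hcard : Fintype.card σ = Fintype.card τ)
    (hmt : Fintype.card σ ≤ t)
    (hchar : ∀ k : ℕ, 1 ≤ k → k ≤ Fintype.card σ → (k : F) ≠ 0)
    (hps : ∀ k : ℕ, 1 ≤ k → k ≤ t → ∑ i, f i ^ k = ∑ j, g j ^ k) :
    ∀ k : ℕ, (univ.val.map f).esymm k = (univ.val.map g).esymm k := by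
  intro k
  induction k using Nat.strong_induction_on with
  | _ k ih =>
    rcases Nat.eq_zero_or_pos k with hk0 | hk1
    · subst hk0; simp [Multiset.esymm]
    rcases le_or_gt k (Fintype.card σ) with hk | hk
    · -- use Newton's identities
      have hf := congrArg (MvPolynomial.aeval f) (MvPolynomial.mul_esymm_eq_sum σ F k)
      have hg := congrArg (MvPolynomial.aeval g) (MvPolynomial.mul_esymm_eq_sum τ F k)
      simp only [map_mul, map_natCast, map_sum, map_pow, map_neg, map_one,
        MvPolynomial.aeval_esymm_eq_multiset_esymm, aeval_psum'] at hf hg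
      have hrhs : ∑ a ∈ (Finset.HasAntidiagonal.antidiagonal k).filter (fun a => a.1 < k),
            (-1 : F) ^ a.1 * (univ.val.map f).esymm a.1 * (∑ i, f i ^ a.2)
          = ∑ a ∈ (Finset.HasAntidiagonal.antidiagonal k).filter (fun a => a.1 < k),
            (-1 : F) ^ a.1 * (univ.val.map g).esymm a.1 * (∑ j, g j ^ a.2) := by
        refine Finset.sum_congr rfl ?_
        intro a ha
        simp only [Finset.mem_filter, Finset.HasAntidiagonal.mem_antidiagonal] at ha
        have h1 : 1 ≤ a.2 := by omega
        have h2 : a.2 ≤ t := by omega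
        rw [ih a.1 (by omega), hps a.2 h1 h2]
      have hkey : (k : F) * (univ.val.map f).esymm k = (k : F) * (univ.val.map g).esymm k := by
        rw [hf, hg, hrhs]
      exact mul_left_cancel₀ (hchar k hk1 hk) hkey
    · -- both sides vanish
      have h1 : (univ.val.map f).esymm k = 0 := by
        rw [Multiset.esymm, Multiset.powersetCard_eq_empty]
        · simp
        · simpa using hk
      have h2 : (univ.val.map g).esymm k = 0 := by
        rw [Multiset.esymm, Multiset.powersetCard_eq_empty]
        · simp
        · simpa [← hcard] using hk
      rw [h1, h2]

open Finset in
lemma multiset_eq_of_psum_eq {F : Type*} [Field F] {σ τ : Type*} [Fintype σ] [Fintype τ]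
    [DecidableEq σ] [DecidableEq τ]
    (f : σ → F) (g : τ → F) (t : ℕ)
    (hcard : Fintype.card σ = Fintype.card τ)
    (hmt : Fintype.card σ ≤ t)
    (hchar : ∀ k : ℕ, 1 ≤ k → k ≤ Fintype.card σ → (k : F) ≠ 0)
    (hps : ∀ k : ℕ, 1 ≤ k → k ≤ t → ∑ i, f i ^ k = ∑ j, g j ^ k) :
    univ.val.map f = univ.val.map g := by
  have hE := esymm_eq_of_psum_eq f g t hcard hmt hchar hps
  have hcards : Multiset.card (univ.val.map f) = Multiset.card (univ.val.map g) := by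
    simp [hcard]
  have hprod : ((univ.val.map f).map fun r => Polynomial.X - Polynomial.C r).prod
      = ((univ.val.map g).map fun r => Polynomial.X - Polynomial.C r).prod := by
    rw [Multiset.prod_X_sub_X_eq_sum_esymm, Multiset.prod_X_sub_X_eq_sum_esymm, hcards]
    exact Finset.sum_congr rfl fun j _ => by rw [hE j]
  have := congrArg Polynomial.roots hprod
  rwa [Polynomial.roots_multiset_prod_X_sub_C, Polynomial.roots_multiset_prod_X_sub_C] at this

/-- Let p > q be prime and t ≥ 1. If x, y ∈ {0,1}^q have weight n, equal
VT-syndrome vectors, and admit a common componentwise lower bound z of weight ≥ n − t, then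
x = y; i.e. every code C(q, n, p, t, a) corrects t asymmetric errors. -/
theorem stmt_12 (q n t p : ℕ) (hp : p.Prime) (hpq : q < p) (ht : 1 ≤ t)
    (x y : Fin q → Bool) (hx : wt x = n) (hy : wt y = n)
    (hs : vts q p t x = vts q p t y)
    (z : Fin q → Bool) (hzx : z ≤ x) (hzy : z ≤ y) (hz : n - t ≤ wt z) :
    x = y := by
  classical
  haveI : Fact p.Prime := ⟨hp⟩
  set h : Fin q → ZMod p := fun i => (((i : ℕ) + 1 : ℕ) : ZMod p) with hh
  have hinj : Function.Injective h := by
    intro i j hij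
    have hi : (i : ℕ) + 1 < p := by omega
    have hj : (j : ℕ) + 1 < p := by omega
    have := congrArg ZMod.val hij
    rw [hh] at this
    simp only [ZMod.val_cast_of_lt hi, ZMod.val_cast_of_lt hj] at this
    exact Fin.ext (by omega)
  have hsubx : supp z ⊆ supp x := by
    intro i hi
    simp only [supp, Finset.mem_filter, Finset.mem_univ, true_and] at hi ⊢
    have := hzx i
    rw [hi] at this
    exact Bool.eq_true_of_true_le this
  have hsuby : supp z ⊆ supp y := by
    intro i hi
    simp only [supp, Finset.mem_filter, Finset.mem_univ, true_and] at hi ⊢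
    have := hzy i
    rw [hi] at this
    exact Bool.eq_true_of_true_le this
  set A : Finset (Fin q) := supp x \ supp z with hA
  set B : Finset (Fin q) := supp y \ supp z with hB
  have hwx : (supp x).card = n := hx
  have hwy : (supp y).card = n := hy
  have hcardA : A.card = n - wt z := by
    rw [hA, Finset.card_sdiff_of_subset hsubx, hwx]; rfl
  have hcardB : B.card = n - wt z := by
    rw [hB, Finset.card_sdiff_of_subset hsuby, hwy]; rfl
  have hzn : wt z ≤ n := by
    have := Finset.card_le_card hsubx
    rw [hwx] at this; exact this
  have hmt : n - wt z ≤ t := by omega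
  have hAq : A.card ≤ q := by
    have := Finset.card_le_card (Finset.subset_univ A)
    simpa using this
  -- power sums over supports agree for k = 1, …, t
  have hsupp_sum : ∀ k : ℕ, 1 ≤ k → k ≤ t →
      ∑ i ∈ supp x, h i ^ k = ∑ i ∈ supp y, h i ^ k := by
    intro k hk1 hk2
    have hkk : k - 1 < t := by omega
    have := congrFun hs ⟨k - 1, hkk⟩
    simp only [vts] at this
    rw [← Finset.sum_filter, ← Finset.sum_filter] at this
    have hkeq : (k - 1) + 1 = k := by omega
    simpa only [supp, hh, hkeq] using this
  -- power sums over A and B agree for k = 1, …, t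
  have hps : ∀ k : ℕ, 1 ≤ k → k ≤ t →
      ∑ i ∈ A, h i ^ k = ∑ i ∈ B, h i ^ k := by
    intro k hk1 hk2
    have h1 : ∑ i ∈ A, h i ^ k + ∑ i ∈ supp z, h i ^ k = ∑ i ∈ supp x, h i ^ k :=
      Finset.sum_sdiff hsubx
    have h2 : ∑ i ∈ B, h i ^ k + ∑ i ∈ supp z, h i ^ k = ∑ i ∈ supp y, h i ^ k :=
      Finset.sum_sdiff hsuby
    have := hsupp_sum k hk1 hk2
    rw [← h1, ← h2] at this
    exact add_right_cancel this
  -- now apply the symmetric-function machinery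
  have hcard : Fintype.card ↥A = Fintype.card ↥B := by
    rw [Fintype.card_coe, Fintype.card_coe, hcardA, hcardB]
  have hmt' : Fintype.card ↥A ≤ t := by rw [Fintype.card_coe, hcardA]; exact hmt
  have hchar : ∀ k : ℕ, 1 ≤ k → k ≤ Fintype.card ↥A → (k : ZMod p) ≠ 0 := by
    intro k hk1 hk2 hzero
    rw [ZMod.natCast_eq_zero_iff] at hzero
    have hkq : k ≤ q := by
      rw [Fintype.card_coe, hcardA] at hk2; omega
    have := Nat.le_of_dvd (by omega) hzero
    omega
  have hps' : ∀ k : ℕ, 1 ≤ k → k ≤ t →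
      ∑ i : ↥A, h i ^ k = ∑ j : ↥B, h j ^ k := by
    intro k hk1 hk2
    rw [Finset.sum_coe_sort A (fun i => h i ^ k), Finset.sum_coe_sort B (fun i => h i ^ k)]
    exact hps k hk1 hk2
  have hmul := multiset_eq_of_psum_eq (fun i : ↥A => h i) (fun j : ↥B => h j) t
    hcard hmt' hchar hps'
  have hmapA : (Finset.univ.val.map (fun i : ↥A => h i)) = A.val.map h := by
    rw [Finset.univ_eq_attach]
    show (A.val.attach.map fun i => h i.val) = A.val.map h
    exact Multiset.attach_map_val' A.val h
  have hmapB : (Finset.univ.val.map (fun j : ↥B => h j)) = B.val.map h := by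
    rw [Finset.univ_eq_attach]
    show (B.val.attach.map fun i => h i.val) = B.val.map h
    exact Multiset.attach_map_val' B.val h
  rw [hmapA, hmapB] at hmul
  have hABval : A.val = B.val := Multiset.map_injective hinj hmul
  have hAB : A = B := Finset.val_inj.mp hABval
  have hsuppeq : supp x = supp y := by
    have h1 : A ∪ supp z = supp x := Finset.sdiff_union_of_subset hsubx
    have h2 : B ∪ supp z = supp y := Finset.sdiff_union_of_subset hsuby
    rw [← h1, ← h2, hAB]
  funext i
  have hxi : x i = true ↔ i ∈ supp x := by
    simp [supp]
  have hyi : y i = true ↔ i ∈ supp y := by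
    simp [supp]
  rw [hsuppeq] at hxi
  have hiff : x i = true ↔ y i = true := hxi.trans hyi.symm
  cases hxv : x i <;> cases hyv : y i <;> simp_all
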